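/- Measuring implies the failure of club guessing at ω₁: if every sequence (C_δ : δ ∈ Lim(ω₁)) of clubs C_δ ⊆ δ is measured by some club C ⊆ ω₁, then there is no club-guessing sequence on ω₁, i.e., there is no sequence (C_δ : δ ∈ Lim(ω₁)) with each C_δ a club of δ such that for every club E ⊆ ω₁ there is δ ∈ Lim(ω₁) with C_δ ⊆ E. -/

import Mathlib

open Cardinal Set

noncomputable section

/-- `α` is a limit point of the set `A` of ordinals. -/
def IsLimitPointOf (A : Set Ordinal) (α : Ordinal) : Prop :=
  α ≠ 0 ∧ ∀ β < α, ∃ γ ∈ A, β < γ ∧ γ < α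

/-- `C` is a club (closed unbounded set) in `δ`. -/
def IsClubIn (C : Set Ordinal) (δ : Ordinal) : Prop :=
  (∀ α ∈ C, α < δ) ∧ (∀ β < δ, ∃ γ ∈ C, β < γ) ∧
    ∀ α < δ, IsLimitPointOf C α → α ∈ C

/-- The Mostowski collapsing function of a set `s` of ordinals:
`collapseMap s β` is the order type of `s ∩ β`. -/
noncomputable def collapseMap (s : Set Ordinal) : Ordinal → Ordinal :=
  WellFounded.fix wellFounded_lt (fun β ih =>
    sSup (Set.range fun γ : {γ : Ordinal // γ ∈ s ∧ γ < β} => ih γ.1 γ.2.2 + 1))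

/-- The order type of a set of ordinals. -/
noncomputable def otypeSet (s : Set Ordinal) : Ordinal :=
  sSup (Set.range fun γ : s => collapseMap s γ.1 + 1)

/-! ### Universe transfer machinery for ordinals below `ω₁` -/

lemma lift_omega1.{u1, v1} :
    Ordinal.lift.{v1} ((Cardinal.aleph 1).ord : Ordinal.{u1}) = (Cardinal.aleph 1).ord := by
  rw [Cardinal.lift_ord, Cardinal.lift_aleph, Ordinal.lift_one]

open Classical in
/-- Transfer of a (countable) ordinal from universe `u1` to universe `v1`. -/
noncomputable def tr.{u1, v1} (a : Ordinal.{u1}) : Ordinal.{v1} :=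
  if h : ∃ b : Ordinal.{v1}, Ordinal.lift.{u1} b = Ordinal.lift.{v1} a then h.choose else 0

lemma lift_tr.{u1, v1} {a : Ordinal.{u1}} (ha : a < (Cardinal.aleph 1).ord) :
    Ordinal.lift.{u1} (tr.{u1, v1} a) = Ordinal.lift.{v1} a := by
  have hex : ∃ b : Ordinal.{v1}, Ordinal.lift.{u1} b = Ordinal.lift.{v1} a := by
    have h1 : Ordinal.lift.{v1} a <
        Ordinal.lift.{u1} ((Cardinal.aleph 1).ord : Ordinal.{v1}) := by
      rw [lift_omega1.{v1, u1}, ← lift_omega1.{u1, v1}]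
      exact Ordinal.lift_lt.mpr ha
    obtain ⟨b, hb⟩ := Ordinal.mem_range_lift_of_le h1.le
    exact ⟨b, hb⟩
  rw [tr, dif_pos hex]
  exact hex.choose_spec

lemma tr_lt_omega1.{u1, v1} {a : Ordinal.{u1}} (ha : a < (Cardinal.aleph 1).ord) :
    tr.{u1, v1} a < (Cardinal.aleph 1).ord := by
  have : Ordinal.lift.{u1} (tr.{u1, v1} a) <
      Ordinal.lift.{u1} ((Cardinal.aleph 1).ord : Ordinal.{v1}) := by
    rw [lift_tr ha, lift_omega1, ← lift_omega1.{u1, v1}]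
    exact Ordinal.lift_lt.mpr ha
  exact Ordinal.lift_lt.mp this

lemma tr_tr.{u1, v1} {a : Ordinal.{u1}} (ha : a < (Cardinal.aleph 1).ord) :
    tr.{v1, u1} (tr.{u1, v1} a) = a := by
  have h1 : tr.{u1, v1} a < (Cardinal.aleph 1).ord := tr_lt_omega1 ha
  exact Ordinal.lift_inj.mp (by rw [lift_tr h1, lift_tr ha])

lemma omega1_isLimit : Order.IsSuccLimit ((Cardinal.aleph 1).ord : Ordinal) :=
  Cardinal.isSuccLimit_ord (Cardinal.aleph0_le_aleph 1)

lemma tr_eq_zero_iff.{u1, v1} {a : Ordinal.{u1}} (ha : a < (Cardinal.aleph 1).ord) :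
    tr.{u1, v1} a = 0 ↔ a = 0 := by
  constructor
  · intro h0
    have h := lift_tr.{u1, v1} ha
    rw [h0, Ordinal.lift_zero] at h
    exact Ordinal.lift_inj.mp (h.symm.trans Ordinal.lift_zero.symm)
  · rintro rfl
    have h := lift_tr.{u1, v1} ha
    rw [Ordinal.lift_zero] at h
    exact Ordinal.lift_inj.mp (h.trans Ordinal.lift_zero.symm)

lemma tr_isLimit.{u1, v1} {a : Ordinal.{u1}} (ha : a < (Cardinal.aleph 1).ord) :
    Order.IsSuccLimit (tr.{u1, v1} a) ↔ Order.IsSuccLimit a := by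
  rw [← Ordinal.isSuccLimit_lift.{u1, v1} (o := tr.{u1, v1} a), lift_tr ha,
    Ordinal.isSuccLimit_lift]

/-- Transfer of a set of countable ordinals from universe `u1` to universe `v1`. -/
def trS.{u1, v1} (A : Set Ordinal.{u1}) : Set Ordinal.{v1} :=
  {b | b < (Cardinal.aleph 1).ord ∧ tr.{v1, u1} b ∈ A}

lemma trS_isClubIn.{u1, v1} {A : Set Ordinal.{u1}} {δ : Ordinal.{u1}} {δ' : Ordinal.{v1}}
    (hδ : δ ≤ (Cardinal.aleph 1).ord) (hδ' : δ' ≤ (Cardinal.aleph 1).ord)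
    (hl : Ordinal.lift.{v1} δ = Ordinal.lift.{u1} δ')
    (h : IsClubIn A δ) : IsClubIn (trS.{u1, v1} A) δ' := by
  obtain ⟨hb, hu, hc⟩ := h
  refine ⟨?_, ?_, ?_⟩
  · rintro b ⟨hbω, hbA⟩
    have : Ordinal.lift.{u1} b < Ordinal.lift.{u1} δ' := by
      rw [← hl, ← lift_tr hbω]
      exact Ordinal.lift_lt.mpr (hb _ hbA)
    exact Ordinal.lift_lt.mp this
  · intro β hβ
    have hβω : β < (Cardinal.aleph 1).ord := lt_of_lt_of_le hβ hδ'
    have htβ : tr.{v1, u1} β < δ := by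
      have : Ordinal.lift.{v1} (tr.{v1, u1} β) < Ordinal.lift.{v1} δ := by
        rw [lift_tr hβω, hl]
        exact Ordinal.lift_lt.mpr hβ
      exact Ordinal.lift_lt.mp this
    obtain ⟨γ, hγA, hγ⟩ := hu _ htβ
    have hγω : γ < (Cardinal.aleph 1).ord := lt_of_lt_of_le (hb _ hγA) hδ
    refine ⟨tr.{u1, v1} γ, ⟨tr_lt_omega1 hγω, by rw [tr_tr hγω]; exact hγA⟩, ?_⟩
    have : Ordinal.lift.{u1} β < Ordinal.lift.{u1} (tr.{u1, v1} γ) := by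
      rw [lift_tr hγω, ← lift_tr hβω]
      exact Ordinal.lift_lt.mpr hγ
    exact Ordinal.lift_lt.mp this
  · rintro α hαδ' ⟨hα0, hlp⟩
    have hαω : α < (Cardinal.aleph 1).ord := lt_of_lt_of_le hαδ' hδ'
    have htαδ : tr.{v1, u1} α < δ := by
      have : Ordinal.lift.{v1} (tr.{v1, u1} α) < Ordinal.lift.{v1} δ := by
        rw [lift_tr hαω, hl]
        exact Ordinal.lift_lt.mpr hαδ'
      exact Ordinal.lift_lt.mp this
    have hlim : IsLimitPointOf A (tr.{v1, u1} α) := by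
      refine ⟨fun h0 => hα0 ((tr_eq_zero_iff hαω).mp h0), ?_⟩
      intro β hβ
      have hβω : β < (Cardinal.aleph 1).ord := lt_trans hβ (lt_of_lt_of_le htαδ hδ)
      have htβα : tr.{u1, v1} β < α := by
        have : Ordinal.lift.{u1} (tr.{u1, v1} β) < Ordinal.lift.{u1} α := by
          rw [lift_tr hβω, ← lift_tr hαω]
          exact Ordinal.lift_lt.mpr hβ
        exact Ordinal.lift_lt.mp this
      obtain ⟨c, ⟨hcω, hcA⟩, hc1, hc2⟩ := hlp _ htβα
      refine ⟨tr.{v1, u1} c, hcA, ?_, ?_⟩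
      · have : Ordinal.lift.{v1} β < Ordinal.lift.{v1} (tr.{v1, u1} c) := by
          rw [lift_tr hcω, ← lift_tr hβω]
          exact Ordinal.lift_lt.mpr hc1
        exact Ordinal.lift_lt.mp this
      · have : Ordinal.lift.{v1} (tr.{v1, u1} c) < Ordinal.lift.{v1} (tr.{v1, u1} α) := by
          rw [lift_tr hcω, lift_tr hαω]
          exact Ordinal.lift_lt.mpr hc2
        exact Ordinal.lift_lt.mp this
    exact ⟨hαω, hc _ htαδ hlim⟩

/-- Transfer of a club-guessing sequence from universe `u1` to universe `v1`. -/
lemma guess_transfer.{u1, v1}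
    (h : ∃ C : Ordinal.{u1} → Set Ordinal.{u1},
      (∀ δ < (Cardinal.aleph 1).ord, Order.IsSuccLimit δ → IsClubIn (C δ) δ) ∧
      ∀ E : Set Ordinal.{u1}, IsClubIn E (Cardinal.aleph 1).ord →
        ∃ δ < (Cardinal.aleph 1).ord, Order.IsSuccLimit δ ∧ C δ ⊆ E) :
    ∃ C : Ordinal.{v1} → Set Ordinal.{v1},
      (∀ δ < (Cardinal.aleph 1).ord, Order.IsSuccLimit δ → IsClubIn (C δ) δ) ∧
      ∀ E : Set Ordinal.{v1}, IsClubIn E (Cardinal.aleph 1).ord →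
        ∃ δ < (Cardinal.aleph 1).ord, Order.IsSuccLimit δ ∧ C δ ⊆ E := by
  obtain ⟨C, hC, hg⟩ := h
  refine ⟨fun δ => trS.{u1, v1} (C (tr.{v1, u1} δ)), ?_, ?_⟩
  · intro δ hδ hlim
    have h1 : tr.{v1, u1} δ < (Cardinal.aleph 1).ord := tr_lt_omega1 hδ
    have h2 : Order.IsSuccLimit (tr.{v1, u1} δ) := (tr_isLimit hδ).mpr hlim
    exact trS_isClubIn h1.le hδ.le (lift_tr.{v1, u1} hδ) (hC _ h1 h2)
  · intro E hE
    have hE' : IsClubIn (trS.{v1, u1} E) (Cardinal.aleph 1).ord :=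
      trS_isClubIn le_rfl le_rfl (by rw [lift_omega1, lift_omega1]) hE
    obtain ⟨δ', hδ', hlim', hsub⟩ := hg _ hE'
    refine ⟨tr.{u1, v1} δ', tr_lt_omega1 hδ', (tr_isLimit hδ').mpr hlim', ?_⟩
    rintro b ⟨hbω, hbC⟩
    rw [tr_tr hδ'] at hbC
    have := hsub hbC
    obtain ⟨_, hbE⟩ := this
    rwa [tr_tr hbω] at hbE

/-- The single-universe version of the theorem. -/
lemma key.{w}
    (measuring : ∀ C : Ordinal.{w} → Set Ordinal.{w},
      (∀ δ < (Cardinal.aleph 1).ord, Order.IsSuccLimit δ → IsClubIn (C δ) δ) →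
      ∃ E : Set Ordinal, IsClubIn E (Cardinal.aleph 1).ord ∧
        ∀ δ ∈ E, ∃ α < δ,
          (∀ γ ∈ E, γ < δ → α ≤ γ → γ ∈ C δ) ∨
          (∀ γ ∈ E, α ≤ γ → γ ∉ C δ)) :
    ¬ ∃ C : Ordinal.{w} → Set Ordinal.{w},
      (∀ δ < (Cardinal.aleph 1).ord, Order.IsSuccLimit δ → IsClubIn (C δ) δ) ∧
      ∀ E : Set Ordinal, IsClubIn E (Cardinal.aleph 1).ord →
        ∃ δ < (Cardinal.aleph 1).ord, Order.IsSuccLimit δ ∧ C δ ⊆ E := by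
  rintro ⟨C, hC, hguess⟩
  obtain ⟨E, ⟨hEb, hEu, hEc⟩, hmeas⟩ := measuring C hC
  set ω₁ := ((Cardinal.aleph 1).ord : Ordinal.{w}) with hω₁
  -- the "next point of E" function
  have hg : ∀ b, b < ω₁ → ∃ γ, γ ∈ E ∧ b < γ := by
    intro b hb; obtain ⟨γ, h1, h2⟩ := hEu b hb; exact ⟨γ, h1, h2⟩
  classical
  let g : Ordinal → Ordinal := fun b => if h : b < ω₁ then (hg b h).choose else 0
  have hgspec : ∀ b (h : b < ω₁), g b ∈ E ∧ b < g b := by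
    intro b h
    simp only [g, dif_pos h]
    exact (hg b h).choose_spec
  -- the set of limit points of E that belong to E
  set E' : Set Ordinal := {x | x ∈ E ∧ IsLimitPointOf E x} with hE'def
  have hE'club : IsClubIn E' ω₁ := by
    refine ⟨fun a ha => hEb a ha.1, ?_, ?_⟩
    · intro β hβ
      let f : ℕ → Ordinal := fun n => Nat.rec (g β) (fun _ ih => g ih) n
      have hf : ∀ n, f n ∈ E ∧ f n < f (n + 1) := by
        intro n
        induction n with
        | zero =>
          have h0 := hgspec β hβ
          exact ⟨h0.1, (hgspec _ (hEb _ h0.1)).2⟩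
        | succ n ih =>
          have h1 : f (n + 1) ∈ E := (hgspec _ (hEb _ ih.1)).1
          exact ⟨h1, (hgspec _ (hEb _ h1)).2⟩
      have hslt : (⨆ n, f n) < ω₁ := by
        refine Cardinal.iSup_lt_ord_lift_of_isRegular Cardinal.isRegular_aleph_one ?_ ?_
        · simpa using Cardinal.aleph0_lt_aleph_one
        · intro i; exact hEb _ (hf i).1
      have hslim : IsLimitPointOf E (⨆ n, f n) := by
        constructor
        · have : f 0 < ⨆ n, f n := lt_of_lt_of_le (hf 0).2 (Ordinal.le_iSup f 1)
          intro h0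
          rw [h0] at this
          exact (not_lt_of_ge zero_le this)
        · intro b hb
          obtain ⟨n, hn⟩ := Ordinal.lt_iSup_iff.mp hb
          exact ⟨f n, (hf n).1, hn, lt_of_lt_of_le (hf n).2 (Ordinal.le_iSup f (n + 1))⟩
      have hsE : (⨆ n, f n) ∈ E := hEc _ hslt hslim
      refine ⟨⨆ n, f n, ⟨hsE, hslim⟩, ?_⟩
      calc β < f 0 := (hgspec β hβ).2
        _ < f 1 := (hf 0).2
        _ ≤ ⨆ n, f n := Ordinal.le_iSup f 1
    · intro a ha ⟨hne, hlp⟩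
      have hlpE : IsLimitPointOf E a := by
        refine ⟨hne, fun b hb => ?_⟩
        obtain ⟨γ, hγ, h1, h2⟩ := hlp b hb
        exact ⟨γ, hγ.1, h1, h2⟩
      exact ⟨hEc a ha hlpE, hlpE⟩
  obtain ⟨δ, hδ, hδlim, hsub⟩ := hguess E' hE'club
  obtain ⟨hCb, hCu, _⟩ := hC δ hδ hδlim
  have hδlp : IsLimitPointOf E δ := by
    refine ⟨hδlim.pos.ne', fun b hb => ?_⟩
    obtain ⟨γ, hγ, h1⟩ := hCu b hb
    exact ⟨γ, (hsub hγ).1, h1, hCb γ hγ⟩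
  have hδE : δ ∈ E := hEc δ hδ hδlp
  obtain ⟨α, hαδ, hin | hout⟩ := hmeas δ hδE
  · -- a tail of E ∩ δ is inside C δ: the least element of E above α is a limit
    -- point of E, contradiction
    have hSne : {γ | γ ∈ E ∧ α < γ ∧ γ < δ}.Nonempty := by
      obtain ⟨γ, hγ, h1, h2⟩ := hδlp.2 α hαδ
      exact ⟨γ, hγ, h1, h2⟩
    set γ := sInf {γ | γ ∈ E ∧ α < γ ∧ γ < δ} with hγdef
    have hγS : γ ∈ E ∧ α < γ ∧ γ < δ := csInf_mem hSne
    have hγC : γ ∈ C δ := hin γ hγS.1 hγS.2.2 hγS.2.1.le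
    obtain ⟨γ', hγ', h1, h2⟩ := (hsub hγC).2.2 α hγS.2.1
    have : γ ≤ γ' := csInf_le' ⟨hγ', h1, h2.trans hγS.2.2⟩
    exact absurd h2 this.not_gt
  · -- a tail of E is disjoint from C δ: but C δ ⊆ E' ⊆ E is unbounded in δ
    obtain ⟨γ, hγ, h1⟩ := hCu α hαδ
    exact hout γ (hsub hγ).1 h1.le hγ

/-- Measuring implies that there is no club-guessing sequence on ω₁. -/
theorem stmt19
    (measuring : ∀ C : Ordinal → Set Ordinal,
      (∀ δ < (Cardinal.aleph 1).ord, Order.IsSuccLimit δ → IsClubIn (C δ) δ) →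
      ∃ E : Set Ordinal, IsClubIn E (Cardinal.aleph 1).ord ∧
        ∀ δ ∈ E, ∃ α < δ,
          (∀ γ ∈ E, γ < δ → α ≤ γ → γ ∈ C δ) ∨
          (∀ γ ∈ E, α ≤ γ → γ ∉ C δ)) :
    ¬ ∃ C : Ordinal → Set Ordinal,
      (∀ δ < (Cardinal.aleph 1).ord, Order.IsSuccLimit δ → IsClubIn (C δ) δ) ∧
      ∀ E : Set Ordinal, IsClubIn E (Cardinal.aleph 1).ord →
        ∃ δ < (Cardinal.aleph 1).ord, Order.IsSuccLimit δ ∧ C δ ⊆ E := by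
  intro h
  exact key measuring (guess_transfer h)

end
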